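/- For every 0 < q < q_c = 7 − 4√3, writing D = q² − 14q + 1 > 0, μ⁻ = (q − 1 − √D)/2 and μ⁺ = (q − 1 + √D)/2, one has F_q′(μ⁻) < 0 and F_q′(μ⁺) > 0; i.e., the fixed points μ = 1 and μ = μ⁻ are linearly stable while μ = μ⁺ is linearly unstable. -/

import Mathlib

/-- The single-site mean-field map of the two-word Listener-Only Naming Game
with committed fraction `q`: `F_q(μ) = (1−q)·4μ/(μ²+3) + q − μ`. -/
noncomputable def ngF (q μ : ℝ) : ℝ := (1 - q) * (4 * μ) / (μ ^ 2 + 3) + q - μ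

lemma ngF_deriv (q μ : ℝ) :
    deriv (ngF q) μ = 4 * (1 - q) * (3 - μ ^ 2) / (μ ^ 2 + 3) ^ 2 - 1 := by
  have h3 : (μ ^ 2 + 3 : ℝ) ≠ 0 := by positivity
  have hnum : HasDerivAt (fun x : ℝ => (1 - q) * (4 * x)) ((1 - q) * 4) μ := by
    simpa using ((hasDerivAt_id μ).const_mul (4 : ℝ)).const_mul (1 - q)
  have hden : HasDerivAt (fun x : ℝ => x ^ 2 + 3) (2 * μ) μ := by
    simpa using ((hasDerivAt_pow 2 μ).add_const 3)
  have hdiv := hnum.div hden h3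
  have h : HasDerivAt (ngF q)
      (((1 - q) * 4 * (μ ^ 2 + 3) - (1 - q) * (4 * μ) * (2 * μ)) / (μ ^ 2 + 3) ^ 2 - 1) μ := by
    have := (hdiv.add_const q).sub (hasDerivAt_id μ)
    exact this.congr_of_eventuallyEq (Filter.Eventually.of_forall fun x => by simp [ngF])
  rw [h.deriv]
  field_simp
  ring

theorem key_ineq (q s : ℝ) (hq0 : 0 < q) (hq1 : q < 1) (hs0 : 0 < s)
    (hs2 : s ^ 2 = q ^ 2 - 14 * q + 1) :
    q ^ 3 - 19 * q ^ 2 + 71 * q - 5 < (1 - q) * (11 - q) * s ∧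
    -((1 - q) * (11 - q) * s) < q ^ 3 - 19 * q ^ 2 + 71 * q - 5 := by
  have hB : 0 < (1 - q) * (11 - q) * s := by
    have : (0:ℝ) < 1 - q := by linarith
    have : (0:ℝ) < 11 - q := by linarith
    positivity
  have hdiff : ((1 - q) * (11 - q) * s) ^ 2 - (q ^ 3 - 19 * q ^ 2 + 71 * q - 5) ^ 2
      = 96 * (q + 1) * s ^ 2 := by linear_combination ((1 - q) ^ 2 * (11 - q) ^ 2 - 96 * (q + 1)) * hs2
  have hpos : 0 < 96 * (q + 1) * s ^ 2 := by positivity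
  constructor <;> nlinarith [hB, hpos, hdiff, sq_nonneg ((1 - q) * (11 - q) * s + (q ^ 3 - 19 * q ^ 2 + 71 * q - 5)), sq_nonneg ((1 - q) * (11 - q) * s - (q ^ 3 - 19 * q ^ 2 + 71 * q - 5))]

/-- For every `0 < q < q_c = 7 − 4√3`, writing `D = q² − 14q + 1 > 0`,
`μ⁻ = (q − 1 − √D)/2` and `μ⁺ = (q − 1 + √D)/2`, one has `F_q′(μ⁻) < 0` and
`F_q′(μ⁺) > 0`; i.e. the fixed points `μ = 1` and `μ = μ⁻` are linearly stable
while `μ = μ⁺` is linearly unstable. -/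
theorem ng_committed_roots_stability (q : ℝ)
    (hq0 : 0 < q) (hqc : q < 7 - 4 * Real.sqrt 3) :
    0 < q ^ 2 - 14 * q + 1 ∧
    deriv (ngF q) ((q - 1 - Real.sqrt (q ^ 2 - 14 * q + 1)) / 2) < 0 ∧
    deriv (ngF q) ((q - 1 + Real.sqrt (q ^ 2 - 14 * q + 1)) / 2) > 0 := by
  have h3sq : Real.sqrt 3 ^ 2 = 3 := Real.sq_sqrt (by norm_num)
  have h3nn : (0:ℝ) ≤ Real.sqrt 3 := Real.sqrt_nonneg 3
  have hq1 : q < 1 := by nlinarith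
  have hD : 0 < q ^ 2 - 14 * q + 1 := by nlinarith [mul_pos (show (0:ℝ) < 7 - 4 * Real.sqrt 3 - q by linarith) (show (0:ℝ) < 7 + 4 * Real.sqrt 3 - q by nlinarith)]
  set s := Real.sqrt (q ^ 2 - 14 * q + 1) with hs_def
  have hs2 : s ^ 2 = q ^ 2 - 14 * q + 1 := Real.sq_sqrt hD.le
  have hs0 : 0 < s := Real.sqrt_pos.mpr hD
  obtain ⟨hk1, hk2⟩ := key_ineq q s hq0 hq1 hs0 hs2
  have h1q : (0:ℝ) < 1 - q := by linarith
  refine ⟨hD, ?_, ?_⟩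
  · rw [ngF_deriv]
    have hpos : (0:ℝ) < (((q - 1 - s) / 2) ^ 2 + 3) ^ 2 := by positivity
    rw [sub_neg, div_lt_one hpos]
    nlinarith [hk1, hs2, h1q, hs0, mul_pos h1q (sub_pos.mpr hk1), sq_nonneg s]
  · rw [ngF_deriv]
    have hpos : (0:ℝ) < (((q - 1 + s) / 2) ^ 2 + 3) ^ 2 := by positivity
    rw [gt_iff_lt, sub_pos, lt_div_iff₀ hpos]
    nlinarith [hk2, hs2, h1q, hs0, mul_pos h1q (sub_pos.mpr hk2), sq_nonneg s]
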